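/- arXiv:2104.00834 — 6 statements merged into one kernel-verified Lean document; each statement's English description precedes it below -/
import Mathlib

section
/- Let I : [0,1] → ℝ be strictly concave and differentiable with I' decreasing, and define g(a, b) = ∫_a^b (x − q₀ − c) dx + I(b − a). If b₁ > b₂ and a₁, a₂ are the (unique) interior maximizers of g(·, b₁) and g(·, b₂) respectively, satisfying I'(bᵢ − aᵢ) = q₀ + c − aᵢ, then a₁ ≥ a₂. -/
/-- Monotone comparative statics (Proposition 2): let `I` be strictly concave and
differentiable with `I'` (strictly) decreasing, and
`g(a,b) = ∫ x in a..b, (x - q₀ - c) + I (b - a)`. If `b₁ > b₂` and `a₁, a₂` are the unique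
interior maximizers of `g(·, b₁)` and `g(·, b₂)` respectively, satisfying the first-order
conditions `I'(bᵢ - aᵢ) = q₀ + c - aᵢ`, then `a₁ ≥ a₂`. -/
theorem club_lower_bound_monotone (q₀ c : ℝ) (hq₀ : q₀ ∈ Set.Ioo (0 : ℝ) 1) (hc : 0 < c)
    (I I' : ℝ → ℝ) (hI : ∀ x ∈ Set.Icc (0 : ℝ) 1, HasDerivAt I (I' x) x)
    (hIconc : StrictConcaveOn ℝ (Set.Icc (0 : ℝ) 1) I)
    (hI' : StrictAntiOn I' (Set.Icc (0 : ℝ) 1))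
    (b₁ b₂ a₁ a₂ : ℝ) (hb : b₁ > b₂) (hb₁ : b₁ ∈ Set.Ioc (0 : ℝ) q₀)
    (hb₂ : b₂ ∈ Set.Ioc (0 : ℝ) q₀)
    (ha₁ : a₁ ∈ Set.Ioo (0 : ℝ) b₁) (ha₂ : a₂ ∈ Set.Ioo (0 : ℝ) b₂)
    (hmax₁ : ∀ a ∈ Set.Icc (0 : ℝ) b₁,
      (∫ x in a..b₁, (x - q₀ - c)) + I (b₁ - a) ≤ (∫ x in a₁..b₁, (x - q₀ - c)) + I (b₁ - a₁))
    (hmax₂ : ∀ a ∈ Set.Icc (0 : ℝ) b₂,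
      (∫ x in a..b₂, (x - q₀ - c)) + I (b₂ - a) ≤ (∫ x in a₂..b₂, (x - q₀ - c)) + I (b₂ - a₂))
    (huniq₁ : ∀ a ∈ Set.Ioo (0 : ℝ) b₁, I' (b₁ - a) = q₀ + c - a → a = a₁)
    (huniq₂ : ∀ a ∈ Set.Ioo (0 : ℝ) b₂, I' (b₂ - a) = q₀ + c - a → a = a₂)
    (hfoc₁ : I' (b₁ - a₁) = q₀ + c - a₁)
    (hfoc₂ : I' (b₂ - a₂) = q₀ + c - a₂) :
    a₁ ≥ a₂ := by
  by_contra h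
  push_neg at h
  have h1 : b₂ - a₂ ∈ Set.Icc (0:ℝ) 1 :=
    ⟨by linarith [ha₂.2], by linarith [hb₂.2, hq₀.2, ha₂.1]⟩
  have h2 : b₁ - a₁ ∈ Set.Icc (0:ℝ) 1 :=
    ⟨by linarith [ha₁.2], by linarith [hb₁.2, hq₀.2, ha₁.1]⟩
  have := hI' h1 h2 (by linarith)
  linarith
end

section
/- In an equilibrium profile where each user α ≤ q₀ reciprocally follows exactly the users with abilities in an interval (q(α)̲, q̄(α)], if user α reciprocally follows a user of ability β < q₀ and does not reciprocally follow a user of ability γ with β < γ ≤ q₀, then α's strategy is not optimal: replacing β by γ strictly increases α's total utility. -/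
open Finset

/-- Exchange argument from the proof of Proposition 2. A user's total utility from a
(finite) set `F` of followees of given abilities is
`V F = Σ_{x ∈ F} (x - q₀) - c * #(reciprocal followees) + I (#reciprocal followees)`,
where followees of ability `≤ q₀` are the reciprocal ones. If the user reciprocally
follows a user of ability `β < q₀` but not a user of ability `γ` with `β < γ ≤ q₀`, her
strategy is not optimal: replacing `β` by `γ` strictly increases her total utility. -/
theorem swap_reciprocal_improves (q₀ c : ℝ) (I : ℕ → ℝ)
    (F : Finset ℝ) (β γ : ℝ) (hβF : β ∈ F) (hγF : γ ∉ F)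
    (hβ : β < q₀) (hβγ : β < γ) (hγ : γ ≤ q₀) :
    (fun G : Finset ℝ =>
        (∑ x ∈ G, (x - q₀)) - c * ((G.filter (fun x => x ≤ q₀)).card : ℝ) +
          I (G.filter (fun x => x ≤ q₀)).card)
      (insert γ (F.erase β)) >
    (fun G : Finset ℝ =>
        (∑ x ∈ G, (x - q₀)) - c * ((G.filter (fun x => x ≤ q₀)).card : ℝ) +
          I (G.filter (fun x => x ≤ q₀)).card) F := by
  simp only
  have hγe : γ ∉ F.erase β := fun h => hγF (mem_of_mem_erase h)
  have hcard : ((insert γ (F.erase β)).filter (fun x => x ≤ q₀)).card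
      = (F.filter (fun x => x ≤ q₀)).card := by
    rw [filter_insert, if_pos hγ, card_insert_of_notMem (fun h => hγe (Finset.mem_of_mem_filter γ h)),
      filter_erase, card_erase_of_mem (by simp [hβF, hβ.le])]
    have : 0 < (F.filter (fun x => x ≤ q₀)).card :=
      card_pos.2 ⟨β, by simp [hβF, hβ.le]⟩
    omega
  rw [hcard]
  have hsum : (∑ x ∈ insert γ (F.erase β), (x - q₀))
      = (∑ x ∈ F, (x - q₀)) - (β - q₀) + (γ - q₀) := by
    rw [sum_insert hγe, sum_erase_eq_sub hβF]
    ring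
  rw [hsum]
  have : (β : ℝ) - q₀ < γ - q₀ := by linarith
  linarith
end

section
/- If for some boundary α_i the maximum over a ∈ [0, α_i] of ∫_a^{α_i} (x − q₀ − c) dx + I(α_i − a) equals I(0) = 0 and is attained only at a = α_i, then no user of ability at most α_i engages in attention bartering: for every interval (a, b] ⊆ [0, α_i] with a < b, the club payoff ∫_a^b (x − q₀ − c) dx + I(b − a) is nonpositive. -/
/-- Termination of club formation (Proposition 3): if for some boundary `αᵢ ≤ q₀` the
maximum over `a ∈ [0, αᵢ]` of `∫ x in a..αᵢ, (x - q₀ - c) + I (αᵢ - a)` equals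
`I 0 = 0` and is attained only at `a = αᵢ`, then no user of ability at most `αᵢ` engages
in attention bartering: every club `(a, b] ⊆ [0, αᵢ]` with `a < b` has nonpositive payoff. -/
theorem no_bartering_below_terminal_boundary (q₀ c : ℝ) (hq₀ : q₀ ∈ Set.Ioo (0 : ℝ) 1)
    (hc : 0 < c) (I : ℝ → ℝ) (hImono : StrictMonoOn I (Set.Icc (0 : ℝ) 1))
    (hIconc : ConcaveOn ℝ (Set.Icc (0 : ℝ) 1) I) (hI0 : I 0 = 0)
    (αi : ℝ) (hαi : αi ∈ Set.Icc (0 : ℝ) q₀)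
    (hmax : ∀ a ∈ Set.Icc (0 : ℝ) αi, (∫ x in a..αi, (x - q₀ - c)) + I (αi - a) ≤ 0)
    (honly : ∀ a ∈ Set.Icc (0 : ℝ) αi,
      (∫ x in a..αi, (x - q₀ - c)) + I (αi - a) = 0 → a = αi) :
    ∀ a b : ℝ, 0 ≤ a → a < b → b ≤ αi →
      (∫ x in a..b, (x - q₀ - c)) + I (b - a) ≤ 0 := by
  intro a b ha hab hbα
  obtain ⟨hα0, hαq⟩ := hαi
  set a' : ℝ := αi - b + a with ha'
  have ha'mem : a' ∈ Set.Icc (0 : ℝ) αi := by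
    constructor <;> [linarith; linarith]
  have hmaxa := hmax a' ha'mem
  have hval : ∀ u v : ℝ, (∫ x in u..v, (x - q₀ - c)) = (v ^ 2 - u ^ 2) / 2 - (q₀ + c) * (v - u) := by
    intro u v
    have h1 : (∫ x in u..v, (x - q₀ - c)) = ∫ x in u..v, (x - (q₀ + c)) := by
      congr 1; ext x; ring
    open intervalIntegral in
    rw [h1, integral_sub intervalIntegrable_id intervalIntegrable_const,
      integral_id, integral_const]
    simp only [smul_eq_mul]
    ring
  have heq : αi - a' = b - a := by ring
  rw [hval] at hmaxa ⊢
  rw [heq] at hmaxa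
  nlinarith [hmaxa, hbα, hab]
end

section
/- Suppose I(x) = √x/2 and the marginal non-bartering user has ability α satisfying the 'Marx condition' that she is indifferent to bartering with her own type: the derivative at zero club size of ε ↦ ∫_{α−ε}^{α}(x − q₀ − c)dx + I(ε) is infinite, hence for any α ∈ [0, q₀] and any c > 0 there exists ε > 0 such that the club (α − ε, α] has strictly positive payoff. Therefore with I(x) = √x/2 no positive-measure set of lurkers exists among users with positive ability. -/
open intervalIntegral


/-- With attention utility `I x = √x / 2`, whose derivative at zero club size is infinite,
small clubs always yield strictly positive payoff: for any `q₀ ∈ (0,1)`, any `c > 0`, and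
any ability `α ∈ [0, q₀]`, there exists `ε > 0` such that the club `(α - ε, α]` has
strictly positive payoff `∫ x in (α-ε)..α, (x - q₀ - c) + √ε / 2 > 0`. Hence with
`I x = √x / 2` no positive-measure set of lurkers exists among users of positive ability. -/
theorem sqrt_attention_small_clubs_profitable (q₀ c : ℝ) (hq₀ : q₀ ∈ Set.Ioo (0 : ℝ) 1)
    (hc : 0 < c) :
    ∀ α ∈ Set.Icc (0 : ℝ) q₀, ∃ ε > (0 : ℝ),
      (∫ x in (α - ε)..α, (x - q₀ - c)) + Real.sqrt ε / 2 > 0 := by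
  intro α hα
  obtain ⟨hα0, hαq⟩ := hα
  obtain ⟨hq0, hq1⟩ := hq₀
  set M : ℝ := q₀ + c + 1 with hM
  have hM1 : 1 < M := by nlinarith
  have hMpos : 0 < M := by linarith
  set s : ℝ := 1 / (4 * M) with hs
  have hspos : 0 < s := by positivity
  refine ⟨s ^ 2, by positivity, ?_⟩
  have hsqrt : Real.sqrt (s ^ 2) = s := Real.sqrt_sq hspos.le
  have hint : (∫ x in (α - s ^ 2)..α, (x - q₀ - c))
      = α ^ 2 / 2 - (α - s ^ 2) ^ 2 / 2 - (q₀ + c) * (α - (α - s ^ 2)) := by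
    have : (∫ x in (α - s ^ 2)..α, (x - q₀ - c))
        = (∫ x in (α - s ^ 2)..α, x) - ∫ x in (α - s ^ 2)..α, (q₀ + c) := by
      rw [← intervalIntegral.integral_sub intervalIntegral.intervalIntegrable_id
        intervalIntegrable_const]
      congr 1; ext x; ring
    rw [this, integral_id, intervalIntegral.integral_const, smul_eq_mul]
    ring
  rw [hint, hsqrt]
  have hs2 : s ^ 2 ≤ 1 := by
    rw [hs]
    rw [div_pow, one_pow]
    rw [div_le_one (by positivity)]
    nlinarith
  have hsM : s * M = 1 / 4 := by
    rw [hs]; field_simp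
  nlinarith [sq_nonneg s, sq_nonneg (s - 1), mul_pos hspos hMpos]
end

section
/- In the homogeneous-model equilibrium with attention bartering, every club member's total utility weakly exceeds her total utility in the no-bartering equilibrium, while her consumption utility is strictly lower: if member of club (a,b] then ΔV = ∫_a^b (x − q₀ − c)dx + I(b − a) ≥ 0 and ΔU = ∫_a^b (x − q₀) dx < 0 for a < b ≤ q₀. -/
/-- In the homogeneous-model equilibrium with attention bartering, a member of an
equilibrium club `(a, b]` (where `a` maximizes the club payoff over `[0, b]`, and lurking,
i.e. `a = b` with payoff `I 0 = 0`, is available) has total utility weakly exceeding her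
no-bartering total utility, while her consumption utility is strictly lower:
`ΔV = ∫ x in a..b, (x - q₀ - c) + I (b - a) ≥ 0` and `ΔU = ∫ x in a..b, (x - q₀) < 0`
for `0 ≤ a < b ≤ q₀`. -/
theorem club_members_gain_total_lose_consumption (q₀ c : ℝ) (hq₀ : q₀ ∈ Set.Ioo (0 : ℝ) 1)
    (hc : 0 < c) (I : ℝ → ℝ) (hI0 : I 0 = 0)
    (a b : ℝ) (ha : 0 ≤ a) (hab : a < b) (hb : b ≤ q₀)
    (hmax : ∀ a' ∈ Set.Icc (0 : ℝ) b,
      (∫ x in a'..b, (x - q₀ - c)) + I (b - a') ≤ (∫ x in a..b, (x - q₀ - c)) + I (b - a)) :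
    0 ≤ (∫ x in a..b, (x - q₀ - c)) + I (b - a) ∧
    (∫ x in a..b, (x - q₀)) < 0 := by
  constructor
  · have h := hmax b ⟨le_trans ha hab.le, le_refl b⟩
    simpa [hI0] using h
  · have : (∫ x in a..b, (x - q₀)) = (b^2 - a^2)/2 - q₀ * (b - a) := by
      rw [intervalIntegral.integral_sub intervalIntegral.intervalIntegrable_id
        (intervalIntegrable_const (c := q₀))]
      simp [integral_id]
      ring
    rw [this]
    nlinarith
end

section
/- Let I be strictly increasing with I(0) = 0, q₀ ∈ (0,1), c ≥ 0. If c ≥ I(q₀) + q₀ (so that even the best possible bartering deal is unprofitable), then for every interval (a, b] ⊆ [0, q₀] the club payoff ∫_a^b (x − q₀ − c) dx + I(b − a) ≤ 0, with equality only for a = b; hence no attention bartering occurs in equilibrium. -/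
open intervalIntegral


/-- The 'monitoring cost so large that no bartering occurs' regime of Section 3.3: let `I`
be strictly increasing with `I 0 = 0`, `q₀ ∈ (0,1)`, `c ≥ 0`, and suppose `I s / s ≤ c`
for every club size `s ∈ (0, q₀]` (even the best possible bartering deal is unprofitable).
Then every club `(a, b] ⊆ [0, q₀]` has nonpositive payoff
`∫ x in a..b, (x - q₀ - c) + I (b - a) ≤ 0`, with equality only when `a = b`; hence no
attention bartering occurs in equilibrium. -/
theorem no_bartering_when_monitoring_costly (q₀ c : ℝ) (hq₀ : q₀ ∈ Set.Ioo (0 : ℝ) 1)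
    (hc : 0 ≤ c) (I : ℝ → ℝ) (hImono : StrictMonoOn I (Set.Icc (0 : ℝ) 1)) (hI0 : I 0 = 0)
    (hcost : ∀ s ∈ Set.Ioc (0 : ℝ) q₀, I s / s ≤ c) :
    ∀ a b : ℝ, 0 ≤ a → a ≤ b → b ≤ q₀ →
      ((∫ x in a..b, (x - q₀ - c)) + I (b - a) ≤ 0 ∧
        ((∫ x in a..b, (x - q₀ - c)) + I (b - a) = 0 → a = b)) := by
  intro a b ha hab hb
  have hint : (∫ x in a..b, (x - q₀ - c)) = (b^2 - a^2)/2 - (q₀ + c)*(b - a) := by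
    have h1 : (∫ x in a..b, (x - q₀ - c)) = (∫ x in a..b, (x - (q₀ + c))) := by
      congr 1; ext x; ring
    rw [h1, integral_sub intervalIntegrable_id intervalIntegrable_const,
      integral_id, integral_const, smul_eq_mul]
    ring
  rcases eq_or_lt_of_le hab with h | h
  · subst h
    simp [hint, hI0]
  · -- a < b
    have hs : b - a ∈ Set.Ioc (0 : ℝ) q₀ := ⟨by linarith, by linarith⟩
    have hIle : I (b - a) ≤ c * (b - a) := by
      have := hcost (b - a) hs
      have hpos : 0 < b - a := hs.1
      calc I (b - a) = (I (b - a) / (b - a)) * (b - a) := by field_simp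
        _ ≤ c * (b - a) := by
          apply mul_le_mul_of_nonneg_right this (le_of_lt hpos)
    have hneg : (b^2 - a^2)/2 - q₀*(b - a) < 0 := by nlinarith
    constructor
    · rw [hint]; nlinarith
    · intro heq
      exfalso
      rw [hint] at heq
      nlinarith
end
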